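/- The operator T_θ on H ⊕ ℂ is bijective, and its inverse is given explicitly by T_θ⁻¹(x,z) = exp(−iθ)·(A(U*(x)) − z·ξ, −⟨x, U ξ⟩ + a·z) for all (x,z) ∈ H ⊕ ℂ, where U* is the adjoint of U. -/

import Mathlib

open scoped InnerProductSpace

noncomputable section

variable {H : Type*} [NormedAddCommGroup H] [InnerProductSpace ℂ H]

/-- The vector `(x, z)` of the Hilbert space direct sum `H ⊕ ℂ`. -/
def mkE (x : H) (z : ℂ) : WithLp 2 (H × ℂ) := (WithLp.equiv 2 (H × ℂ)).symm (x, z)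

/-- With `ξ ≠ 0`, `a = √(1 + ‖ξ‖²)`, `A x = x + ((a−1)/‖ξ‖²)·⟨x,ξ⟩·ξ`, `U` unitary, and
`T_θ(x,z) = e^{iθ}·(U(A x) + z·U ξ, ⟨x,ξ⟩ + a·z)`, the operator `T_θ` is bijective with
inverse `T_θ⁻¹(x,z) = e^{−iθ}·(A(U*(x)) − z·ξ, −⟨x, U ξ⟩ + a·z)`.
(The paper's inner product `⟨x,y⟩` is linear in the first slot, i.e. `⟪y,x⟫_ℂ` in Mathlib's
convention.) -/
theorem stmt4 [CompleteSpace H]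
    (ξ : H) (hξ : ξ ≠ 0) (a : ℝ) (ha : a = Real.sqrt (1 + ‖ξ‖ ^ 2))
    (A : H →L[ℂ] H)
    (hA : ∀ x : H, A x = x + ((((a - 1) / ‖ξ‖ ^ 2 : ℝ) : ℂ) * ⟪ξ, x⟫_ℂ) • ξ)
    (U : H →L[ℂ] H) (hU : U ∈ unitary (H →L[ℂ] H)) (θ : ℝ)
    (T : WithLp 2 (H × ℂ) →L[ℂ] WithLp 2 (H × ℂ))
    (hT : ∀ (x : H) (z : ℂ),
      T (mkE x z) =
        Complex.exp (θ * Complex.I) • mkE (U (A x) + z • U ξ) (⟪ξ, x⟫_ℂ + (a : ℂ) * z)) :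
    Function.Bijective T ∧
      ∀ (x : H) (z : ℂ),
        T (Complex.exp (-(θ * Complex.I)) •
            mkE (A (ContinuousLinearMap.adjoint U x) - z • ξ) (-⟪U ξ, x⟫_ℂ + (a : ℂ) * z)) =
          mkE x z := by
  have hn : ‖ξ‖ ≠ 0 := norm_ne_zero_iff.mpr hξ
  have hn2 : (‖ξ‖ : ℝ) ^ 2 ≠ 0 := pow_ne_zero 2 hn
  have ha2 : a ^ 2 = 1 + ‖ξ‖ ^ 2 := by
    rw [ha, Real.sq_sqrt]; positivity
  set c : ℂ := (((a - 1) / ‖ξ‖ ^ 2 : ℝ) : ℂ) with hc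
  have hnc : ((‖ξ‖ ^ 2 : ℝ) : ℂ) ≠ 0 := by exact_mod_cast hn2
  have ha2c : ((a : ℂ)) ^ 2 = 1 + ((‖ξ‖ ^ 2 : ℝ) : ℂ) := by exact_mod_cast ha2
  have hncc : (‖ξ‖ : ℂ) ≠ 0 := by exact_mod_cast hn
  have hcmul : c * ((‖ξ‖ ^ 2 : ℝ) : ℂ) = (a : ℂ) - 1 := by
    rw [hc]; push_cast; field_simp
  have hc1 : c * (1 + (a : ℂ)) = 1 := by
    have h : (c * (1 + (a : ℂ)) - 1) * ((‖ξ‖ ^ 2 : ℝ) : ℂ) = 0 := by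
      linear_combination (1 + (a : ℂ)) * hcmul + ha2c
    rcases mul_eq_zero.mp h with h' | h'
    · linear_combination h'
    · exact absurd h' hnc
  have hself : ⟪ξ, ξ⟫_ℂ = ((‖ξ‖ ^ 2 : ℝ) : ℂ) := by exact_mod_cast inner_self_eq_norm_sq_to_K ξ
  have hinnerA : ∀ v : H, ⟪ξ, A v⟫_ℂ = (a : ℂ) * ⟪ξ, v⟫_ℂ := by
    intro v
    rw [hA v, inner_add_right, inner_smul_right, hself]
    linear_combination (⟪ξ, v⟫_ℂ) * hcmul
  have hAξ : A ξ = (a : ℂ) • ξ := by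
    rw [hA ξ, hself, hcmul]
    module
  have hAA : ∀ v : H, A (A v) = v + ⟪ξ, v⟫_ℂ • ξ := by
    intro v
    rw [hA (A v), hinnerA, hA v]
    match_scalars
    · ring
    · linear_combination ⟪ξ, v⟫_ℂ * hc1
  have hUst := Unitary.mem_iff.mp hU
  have hadj1 : ∀ x : H, ContinuousLinearMap.adjoint U (U x) = x := by
    intro x
    have := ContinuousLinearMap.ext_iff.mp hUst.1 x
    simpa [ContinuousLinearMap.mul_apply, ← ContinuousLinearMap.star_eq_adjoint] using this
  have hadj2 : ∀ x : H, U (ContinuousLinearMap.adjoint U x) = x := by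
    intro x
    have := ContinuousLinearMap.ext_iff.mp hUst.2 x
    simpa [ContinuousLinearMap.mul_apply, ← ContinuousLinearMap.star_eq_adjoint] using this
  have hadjr : ∀ x y : H, ⟪x, ContinuousLinearMap.adjoint U y⟫_ℂ = ⟪U x, y⟫_ℂ :=
    fun x y => ContinuousLinearMap.adjoint_inner_right U x y
  have hUinner : ∀ v w : H, ⟪U v, U w⟫_ℂ = ⟪v, w⟫_ℂ := by
    intro v w
    rw [← hadjr, hadj1]
  have hexp : Complex.exp (-(θ * Complex.I)) * Complex.exp (θ * Complex.I) = 1 := by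
    rw [← Complex.exp_add, neg_add_cancel, Complex.exp_zero]
  -- the inverse formula (second conjunct)
  have key : ∀ (x : H) (z : ℂ),
      T (Complex.exp (-(θ * Complex.I)) •
          mkE (A (ContinuousLinearMap.adjoint U x) - z • ξ) (-⟪U ξ, x⟫_ℂ + (a : ℂ) * z)) =
        mkE x z := by
    intro x z
    rw [map_smul, hT, smul_smul, hexp, one_smul]
    have h1 : U (A (A (ContinuousLinearMap.adjoint U x) - z • ξ)) +
        (-⟪U ξ, x⟫_ℂ + (a : ℂ) * z) • U ξ = x := by
      simp only [map_sub, map_smul, map_add, hAA, hAξ, hadj2, hadjr]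
      module
    have h2 : ⟪ξ, A (ContinuousLinearMap.adjoint U x) - z • ξ⟫_ℂ +
        (a : ℂ) * (-⟪U ξ, x⟫_ℂ + (a : ℂ) * z) = z := by
      rw [inner_sub_right, inner_smul_right, hinnerA, hadjr, hself]
      linear_combination z * ha2c
    rw [h1, h2]
  -- left inverse for injectivity
  have hleft : ∀ q : WithLp 2 (H × ℂ),
      (fun p : WithLp 2 (H × ℂ) =>
        Complex.exp (-(θ * Complex.I)) •
          mkE (A (ContinuousLinearMap.adjoint U p.fst) - p.snd • ξ)
            (-⟪U ξ, p.fst⟫_ℂ + (a : ℂ) * p.snd)) (T q) = q := by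
    intro q
    have hq : T q = Complex.exp (θ * Complex.I) •
        mkE (U (A q.fst) + q.snd • U ξ) (⟪ξ, q.fst⟫_ℂ + (a : ℂ) * q.snd) := hT q.fst q.snd
    set e := Complex.exp (θ * Complex.I) with he
    have hfst : (T q).fst = e • (U (A q.fst) + q.snd • U ξ) := by rw [hq]; rfl
    have hsnd : (T q).snd = e * (⟪ξ, q.fst⟫_ℂ + (a : ℂ) * q.snd) := by rw [hq]; rfl
    simp only [hfst, hsnd]
    have h1 : A (ContinuousLinearMap.adjoint U (e • (U (A q.fst) + q.snd • U ξ))) -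
        (e * (⟪ξ, q.fst⟫_ℂ + (a : ℂ) * q.snd)) • ξ = e • q.fst := by
      simp only [map_smul, map_add, hadj1, hAA, hAξ]
      module
    have h2 : -⟪U ξ, e • (U (A q.fst) + q.snd • U ξ)⟫_ℂ +
        (a : ℂ) * (e * (⟪ξ, q.fst⟫_ℂ + (a : ℂ) * q.snd)) = e * q.snd := by
      rw [inner_smul_right, inner_add_right, inner_smul_right, hUinner, hUinner, hinnerA, hself]
      linear_combination e * q.snd * ha2c
    rw [h1, h2]
    show Complex.exp (-(θ * Complex.I)) • e • mkE q.fst q.snd = q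
    rw [smul_smul, hexp, one_smul]
    rfl
  refine ⟨⟨fun p q hpq => ?_, fun q => ⟨_, key q.fst q.snd⟩⟩, key⟩
  have := hleft p
  rw [hpq, hleft q] at this
  exact this.symm

end
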